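/- Epoch contraction for deterministic VMD: suppose at the start of an epoch ‖V̂_k − V*‖_∞ ≤ u, ‖(I−γP_{π*})^{-1} D_{π̂_k}^{π*}‖_∞ ≤ D/(1−γ), and V̂_k ≥ Γ_{π̂_k} V̂_k. Running T = ⌈4/(1−γ)⌉ iterations of value mirror descent with stepsize η = D/u yields outputs satisfying ‖V^{π̂_{k+1}} − V*‖_∞ ≤ ‖V̂_{k+1} − V*‖_∞ ≤ u/2 and ‖(I−γP_{π*})^{-1} D_{π̂_{k+1}}^{π*}‖_∞ ≤ 2D/(1−γ). -/

import Mathlib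

open Matrix

/-- The policy Bellman operator `(Γ_π V)(s) = ⟨c(s,·) + γ P_s V, π(·|s)⟩ + h(π(·|s))`. -/
noncomputable def Bellman {S A : Type*} [Fintype S] [Fintype A]
    (c : S → A → ℝ) (P : S → A → S → ℝ) (h : (A → ℝ) → ℝ) (γ : ℝ)
    (π : S → A → ℝ) (V : S → ℝ) (s : S) : ℝ :=
  (∑ a, π s a * (c s a + γ * ∑ s', P s a s' * V s')) + h (π s)

/-- The state-transition matrix `P_π(s,s') = ∑_a π(a|s) P(s'|s,a)` induced by a policy. -/
noncomputable def polMat {S A : Type*} [Fintype S] [Fintype A]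
    (P : S → A → S → ℝ) (π : S → A → ℝ) : Matrix S S ℝ :=
  fun s s' => ∑ a, π s a * P s a s'

/-- Epoch contraction for deterministic VMD. If at the start of the epoch
`‖V̂_k − V*‖_∞ ≤ u`, `‖(I−γP_{π*})⁻¹ D_{π̂_k}^{π*}‖_∞ ≤ Dc/(1−γ)` and
`V̂_k ≥ Γ_{π̂_k} V̂_k`, then running `T = ⌈4/(1−γ)⌉` VMD iterations with stepsize
`η = Dc/u` yields `‖V^{π̂_{k+1}} − V*‖_∞ ≤ ‖V̂_{k+1} − V*‖_∞ ≤ u/2` and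
`‖(I−γP_{π*})⁻¹ D_{π̂_{k+1}}^{π*}‖_∞ ≤ 2Dc/(1−γ)`. -/
theorem vmd_epoch_contraction
    {S A : Type*} [Fintype S] [DecidableEq S] [Fintype A]
    (γ : ℝ) (hγ0 : 0 < γ) (hγ1 : γ < 1)
    (c : S → A → ℝ) (P : S → A → S → ℝ)
    (hP0 : ∀ s a s', 0 ≤ P s a s') (hP1 : ∀ s a, ∑ s', P s a s' = 1)
    (h : (A → ℝ) → ℝ)
    (D : (A → ℝ) → (A → ℝ) → ℝ) (hD : ∀ x y, 0 ≤ D x y) (hDzero : ∀ x, D x x = 0)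
    (u Dc : ℝ) (hu : 0 < u) (hDc : 0 < Dc)
    (T : ℕ) (hT : T = ⌈(4 : ℝ) / (1 - γ)⌉₊)
    (η : ℝ) (hη : η = Dc / u)
    (π : ℕ → S → A → ℝ) (hπ : ∀ t s, π t s ∈ stdSimplex ℝ A)
    (V : ℕ → S → ℝ)
    (πstar : S → A → ℝ) (hπstar : ∀ s, πstar s ∈ stdSimplex ℝ A)
    (Vstar : S → ℝ) (hVstarfix : ∀ s, Vstar s = Bellman c P h γ πstar Vstar s)
    (hVstaropt : ∀ p : S → A → ℝ, (∀ s, p s ∈ stdSimplex ℝ A) →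
      ∀ W : S → ℝ, (∀ s, W s = Bellman c P h γ p W s) → ∀ s, Vstar s ≤ W s)
    (hgap : ‖V 0 - Vstar‖ ≤ u)
    (hbreg : ‖(∑' i : ℕ, (γ • polMat P πstar) ^ i).mulVec
        (fun s => D (π 0 s) (πstar s))‖ ≤ Dc / (1 - γ))
    (hinit : ∀ s, Bellman c P h γ (π 0) (V 0) s ≤ V 0 s)
    (hthree : ∀ t < T, ∀ s, ∀ p ∈ stdSimplex ℝ A,
      η * ((∑ a, (c s a + γ * ∑ s', P s a s' * V t s') * (π (t + 1) s a - p a))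
            + h (π (t + 1) s) - h p) + D (π t s) (π (t + 1) s)
        ≤ D (π t s) p - D (π (t + 1) s) p)
    (hupd : ∀ t < T, ∀ s, V (t + 1) s = Bellman c P h γ (π (t + 1)) (V t) s)
    (W : S → ℝ) (hW : ∀ s, W s = Bellman c P h γ (π T) W s) :
    ‖W - Vstar‖ ≤ ‖V T - Vstar‖ ∧ ‖V T - Vstar‖ ≤ u / 2 ∧
      ‖(∑' i : ℕ, (γ • polMat P πstar) ^ i).mulVec
        (fun s => D (π T s) (πstar s))‖ ≤ 2 * Dc / (1 - γ) := by
  classical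
  have h1γ : (0:ℝ) < 1 - γ := by linarith
  -- trivial case: S empty
  rcases isEmpty_or_nonempty S with hS | hS
  · have hz : ∀ f : S → ℝ, ‖f‖ = 0 := by
      intro f
      have : f = 0 := funext (fun s => isEmptyElim s)
      rw [this, norm_zero]
    refine ⟨by rw [hz, hz], by rw [hz]; positivity, by rw [hz]; positivity⟩
  have hη0 : 0 < η := by rw [hη]; positivity
  -- notation
  set Pm := polMat P πstar with hPmdef
  set x := γ • Pm with hxdef
  set M := ∑' i : ℕ, x ^ i with hMdef
  -- basic facts about Pm
  have hPm0 : ∀ s s', 0 ≤ Pm s s' := by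
    intro s s'
    exact Finset.sum_nonneg fun a _ => mul_nonneg ((hπstar s).1 a) (hP0 s a s')
  have hPm1 : ∀ s, ∑ s', Pm s s' = 1 := by
    intro s
    show ∑ s', ∑ a, πstar s a * P s a s' = 1
    rw [Finset.sum_comm]
    calc ∑ a, ∑ s', πstar s a * P s a s'
        = ∑ a, πstar s a * ∑ s', P s a s' := by
          refine Finset.sum_congr rfl fun a _ => ?_
          rw [Finset.mul_sum]
      _ = 1 := by
          simp only [hP1, mul_one]
          exact (hπstar s).2
  -- powers of x
  have hxpow : ∀ i : ℕ, (∀ s s', 0 ≤ (x ^ i) s s') ∧ (∀ s, ∑ s', (x ^ i) s s' = γ ^ i) := by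
    intro i
    induction i with
    | zero =>
      constructor
      · intro s s'
        simp [Matrix.one_apply]
        split <;> norm_num
      · intro s
        simp [Matrix.one_apply]
    | succ i ih =>
      have hx0 : ∀ s s', 0 ≤ x s s' := by
        intro s s'
        have : x s s' = γ * Pm s s' := rfl
        rw [this]
        exact mul_nonneg hγ0.le (hPm0 s s')
      constructor
      · intro s s'
        rw [pow_succ, Matrix.mul_apply]
        exact Finset.sum_nonneg fun k _ => mul_nonneg (ih.1 s k) (hx0 k s')
      · intro s
        have hrow : ∀ k, ∑ s', x k s' = γ := by
          intro k
          have : ∀ s', x k s' = γ * Pm k s' := fun s' => rfl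
          simp only [this, ← Finset.mul_sum, hPm1, mul_one]
        calc ∑ s', (x ^ (i+1)) s s' = ∑ s', ∑ k, (x ^ i) s k * x k s' := by
              refine Finset.sum_congr rfl fun s' _ => ?_
              rw [pow_succ, Matrix.mul_apply]
          _ = ∑ k, (x ^ i) s k * ∑ s', x k s' := by
              rw [Finset.sum_comm]
              exact Finset.sum_congr rfl fun k _ => (Finset.mul_sum _ _ _).symm
          _ = γ ^ (i+1) := by
              simp only [hrow, ← Finset.sum_mul, ih.2, pow_succ]
  have hxent : ∀ i s s', (x ^ i) s s' ≤ γ ^ i := by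
    intro i s s'
    calc (x ^ i) s s' ≤ ∑ s'', (x ^ i) s s'' :=
          Finset.single_le_sum (fun k _ => (hxpow i).1 s k) (Finset.mem_univ s')
      _ = γ ^ i := (hxpow i).2 s
  have hsum : ∀ s s', Summable (fun i => (x ^ i) s s') := by
    intro s s'
    refine Summable.of_nonneg_of_le (fun i => (hxpow i).1 s s') (fun i => hxent i s s') ?_
    exact summable_geometric_of_lt_one hγ0.le hγ1
  have hMsum : Summable (fun i => x ^ i) := by
    show Summable (fun i => (x ^ i : S → S → ℝ))
    rw [Pi.summable]
    intro s
    rw [Pi.summable]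
    intro s'
    exact hsum s s'
  have hMsum1 : ∀ s, Summable (fun i => (x ^ i) s) := by
    intro s
    rw [Pi.summable]
    intro s'
    exact hsum s s'
  have hMapp : ∀ s s', M s s' = ∑' i, (x ^ i) s s' := by
    intro s s'
    rw [hMdef]
    have e1 : ∀ f : ℕ → S → S → ℝ, Summable f → (∑' i, f i) s = ∑' i, f i s :=
      fun f hf => tsum_apply hf
    exact (congrFun (e1 (fun i => x ^ i) hMsum) s').trans (tsum_apply (hMsum1 s))
  -- M entry facts
  have hM0 : ∀ s s', 0 ≤ M s s' := by
    intro s s'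
    rw [hMapp]
    exact tsum_nonneg fun i => (hxpow i).1 s s'
  have hMrow : ∀ s, ∑ s', M s s' = (1 - γ)⁻¹ := by
    intro s
    calc ∑ s', M s s' = ∑ s', ∑' i, (x ^ i) s s' := by
          exact Finset.sum_congr rfl fun s' _ => hMapp s s'
      _ = ∑' i, ∑ s', (x ^ i) s s' := (Summable.tsum_finsetSum fun s' _ => hsum s s').symm
      _ = ∑' i : ℕ, γ ^ i := by
          exact tsum_congr fun i => (hxpow i).2 s
      _ = (1 - γ)⁻¹ := tsum_geometric_of_lt_one hγ0.le hγ1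
  -- the resolvent identity M * x = M - 1
  have hMx : M * x = M - 1 := by
    ext s s'
    rw [Matrix.mul_apply, Matrix.sub_apply]
    calc ∑ k, M s k * x k s' = ∑ k, ∑' i, (x ^ i) s k * x k s' := by
          refine Finset.sum_congr rfl fun k _ => ?_
          rw [hMapp, tsum_mul_right]
      _ = ∑' i, ∑ k, (x ^ i) s k * x k s' :=
          (Summable.tsum_finsetSum fun k _ => (hsum s k).mul_right _).symm
      _ = ∑' i, (x ^ (i+1)) s s' := by
          refine tsum_congr fun i => ?_
          rw [pow_succ, Matrix.mul_apply]
      _ = M s s' - (1 : Matrix S S ℝ) s s' := by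
          have h0 := Summable.tsum_eq_zero_add (hsum s s')
          rw [hMapp]
          have : (x ^ 0) s s' = (1 : Matrix S S ℝ) s s' := by rw [pow_zero]
          rw [← this]
          linarith [h0]
  -- mulVec facts
  have hmv : ∀ (v : S → ℝ) s, M.mulVec v s = ∑ s', M s s' * v s' := fun v s => rfl
  have hMmono : ∀ (v w : S → ℝ), (∀ s, v s ≤ w s) → ∀ s, M.mulVec v s ≤ M.mulVec w s := by
    intro v w hvw s
    exact Finset.sum_le_sum fun s' _ => mul_le_mul_of_nonneg_left (hvw s') (hM0 s s')
  have hMbound : ∀ (v : S → ℝ) s, |M.mulVec v s| ≤ (1 - γ)⁻¹ * ‖v‖ := by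
    intro v s
    calc |M.mulVec v s| ≤ ∑ s', |M s s' * v s'| := Finset.abs_sum_le_sum_abs _ _
      _ ≤ ∑ s', M s s' * ‖v‖ := by
          refine Finset.sum_le_sum fun s' _ => ?_
          rw [abs_mul, abs_of_nonneg (hM0 s s')]
          exact mul_le_mul_of_nonneg_left (norm_le_pi_norm v s') (hM0 s s')
      _ = (1 - γ)⁻¹ * ‖v‖ := by rw [← Finset.sum_mul, hMrow]
  have hMnonneg : ∀ (v : S → ℝ), (∀ s, 0 ≤ v s) → ∀ s, 0 ≤ M.mulVec v s := by
    intro v hv s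
    exact Finset.sum_nonneg fun s' _ => mul_nonneg (hM0 s s') (hv s')
  have hMres : ∀ (v : S → ℝ), M.mulVec (x.mulVec v) = M.mulVec v - v := by
    intro v
    rw [Matrix.mulVec_mulVec, hMx, Matrix.sub_mulVec, Matrix.one_mulVec]
  -- Bellman structure
  have hBell : ∀ (p : S → A → ℝ) (V0 : S → ℝ) s,
      Bellman c P h γ p V0 s
        = ((∑ a, p s a * c s a) + h (p s)) + γ * ∑ s', polMat P p s s' * V0 s' := by
    intro p V0 s
    simp only [Bellman, polMat]
    have h1 : ∑ a, p s a * (c s a + γ * ∑ s', P s a s' * V0 s')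
        = (∑ a, p s a * c s a) + γ * ∑ a, p s a * ∑ s', P s a s' * V0 s' := by
      calc ∑ a, p s a * (c s a + γ * ∑ s', P s a s' * V0 s')
          = ∑ a, (p s a * c s a + γ * (p s a * ∑ s', P s a s' * V0 s')) :=
            Finset.sum_congr rfl fun a _ => by ring
        _ = (∑ a, p s a * c s a) + ∑ a, γ * (p s a * ∑ s', P s a s' * V0 s') :=
            Finset.sum_add_distrib
        _ = (∑ a, p s a * c s a) + γ * ∑ a, p s a * ∑ s', P s a s' * V0 s' := by
            rw [← Finset.mul_sum]
    have h2 : ∑ s', (∑ a, p s a * P s a s') * V0 s'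
        = ∑ a, p s a * ∑ s', P s a s' * V0 s' := by
      calc ∑ s', (∑ a, p s a * P s a s') * V0 s'
          = ∑ s', ∑ a, p s a * (P s a s' * V0 s') := by
            refine Finset.sum_congr rfl fun s' _ => ?_
            rw [Finset.sum_mul]
            exact Finset.sum_congr rfl fun a _ => by ring
        _ = ∑ a, ∑ s', p s a * (P s a s' * V0 s') := Finset.sum_comm
        _ = ∑ a, p s a * ∑ s', P s a s' * V0 s' :=
            Finset.sum_congr rfl fun a _ => (Finset.mul_sum _ _ _).symm
    rw [h1, h2]
    ring
  have hpolnn : ∀ (p : S → A → ℝ), (∀ s, p s ∈ stdSimplex ℝ A) →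
      ∀ s s', 0 ≤ polMat P p s s' := by
    intro p hp s s'
    exact Finset.sum_nonneg fun a _ => mul_nonneg ((hp s).1 a) (hP0 s a s')
  have hpolrow : ∀ (p : S → A → ℝ), (∀ s, p s ∈ stdSimplex ℝ A) →
      ∀ s, ∑ s', polMat P p s s' = 1 := by
    intro p hp s
    simp only [polMat]
    rw [Finset.sum_comm]
    calc ∑ a, ∑ s', p s a * P s a s' = ∑ a, p s a * ∑ s', P s a s' := by
          exact Finset.sum_congr rfl fun a _ => (Finset.mul_sum _ _ _).symm
      _ = 1 := by simp only [hP1, mul_one]; exact (hp s).2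
  have hBmono : ∀ (p : S → A → ℝ), (∀ s, p s ∈ stdSimplex ℝ A) →
      ∀ (V1 V2 : S → ℝ), (∀ s, V1 s ≤ V2 s) →
      ∀ s, Bellman c P h γ p V1 s ≤ Bellman c P h γ p V2 s := by
    intro p hp V1 V2 h12 s
    rw [hBell, hBell]
    have : ∑ s', polMat P p s s' * V1 s' ≤ ∑ s', polMat P p s s' * V2 s' :=
      Finset.sum_le_sum fun s' _ => mul_le_mul_of_nonneg_left (h12 s') (hpolnn p hp s s')
    nlinarith [hγ0.le]
  -- policy-difference form of Bellman
  have hBpol : ∀ (p q : S → A → ℝ) (V0 : S → ℝ) s,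
      Bellman c P h γ p V0 s - Bellman c P h γ q V0 s
        = (∑ a, (c s a + γ * ∑ s', P s a s' * V0 s') * (p s a - q s a))
          + h (p s) - h (q s) := by
    intro p q V0 s
    simp only [Bellman]
    have key : ∑ a, (c s a + γ * ∑ s', P s a s' * V0 s') * (p s a - q s a)
        = (∑ a, p s a * (c s a + γ * ∑ s', P s a s' * V0 s'))
          - ∑ a, q s a * (c s a + γ * ∑ s', P s a s' * V0 s') := by
      rw [← Finset.sum_sub_distrib]
      exact Finset.sum_congr rfl fun a _ => by ring
    rw [key]
    ring
  -- value difference form of Bellman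
  have hBdiffV : ∀ (p : S → A → ℝ) (V1 V2 : S → ℝ) s,
      Bellman c P h γ p V1 s - Bellman c P h γ p V2 s
        = γ * ∑ s', polMat P p s s' * (V1 s' - V2 s') := by
    intro p V1 V2 s
    rw [hBell, hBell]
    have : ∑ s', polMat P p s s' * (V1 s' - V2 s')
        = (∑ s', polMat P p s s' * V1 s') - ∑ s', polMat P p s s' * V2 s' := by
      rw [← Finset.sum_sub_distrib]
      exact Finset.sum_congr rfl fun s' _ => by ring
    rw [this]
    ring
  -- each VMD step decreases the value (given approximate improvement at t)
  have hstep : ∀ t, t < T → (∀ s, Bellman c P h γ (π t) (V t) s ≤ V t s) →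
      ∀ s, V (t+1) s ≤ V t s := by
    intro t ht hle s
    have h3 := hthree t ht s (π t s) (hπ t s)
    rw [hDzero] at h3
    have hd1 := hD (π t s) (π (t+1) s)
    have hd2 := hD (π (t+1) s) (π t s)
    have hA : η * ((∑ a, (c s a + γ * ∑ s', P s a s' * V t s') * (π (t+1) s a - π t s a))
        + h (π (t+1) s) - h (π t s)) ≤ η * 0 := by rw [mul_zero]; linarith
    have hA' := le_of_mul_le_mul_left hA hη0
    have hB := hBpol (π (t+1)) (π t) (V t) s
    have hupd' := hupd t ht s
    linarith [hle s]
  have hGle : ∀ t, t ≤ T → ∀ s, Bellman c P h γ (π t) (V t) s ≤ V t s := by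
    intro t
    induction t with
    | zero => exact fun _ s => hinit s
    | succ t ih =>
      intro ht s
      have ht' : t < T := Nat.lt_of_succ_le ht
      have hdec := hstep t ht' (ih ht'.le)
      have h1 : Bellman c P h γ (π (t+1)) (V (t+1)) s ≤ Bellman c P h γ (π (t+1)) (V t) s :=
        hBmono (π (t+1)) (hπ (t+1)) _ _ hdec s
      rw [← hupd t ht' s] at h1
      exact h1
  have hVdec : ∀ t, t < T → ∀ s, V (t+1) s ≤ V t s :=
    fun t ht => hstep t ht (hGle t ht.le)
  have hVmono : ∀ t t' : ℕ, t ≤ t' → t' ≤ T → ∀ s, V t' s ≤ V t s := by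
    intro t t' htt'
    induction t', htt' using Nat.le_induction with
    | base => exact fun _ s => le_refl _
    | succ n hn ih =>
      intro hnT s
      exact le_trans (hVdec n (Nat.lt_of_succ_le hnT) s) (ih (by omega) s)
  -- V* ≤ W ≤ V_T
  have hWge : ∀ s, Vstar s ≤ W s := hVstaropt (π T) (hπ T) W hW
  have hWle : ∀ s, W s ≤ V T s := by
    obtain ⟨s0, _, hs0⟩ := Finset.exists_max_image Finset.univ (fun s => W s - V T s)
      ⟨hS.some, Finset.mem_univ _⟩
    have h2 := hBdiffV (π T) W (V T) s0
    have h3 : ∑ s', polMat P (π T) s0 s' * (W s' - V T s') ≤ W s0 - V T s0 := by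
      calc ∑ s', polMat P (π T) s0 s' * (W s' - V T s')
          ≤ ∑ s', polMat P (π T) s0 s' * (W s0 - V T s0) :=
            Finset.sum_le_sum fun s' _ =>
              mul_le_mul_of_nonneg_left (hs0 s' (Finset.mem_univ s')) (hpolnn (π T) (hπ T) s0 s')
        _ = W s0 - V T s0 := by rw [← Finset.sum_mul, hpolrow (π T) (hπ T), one_mul]
    have hm : W s0 - V T s0 ≤ γ * (W s0 - V T s0) := by
      have h4 := hGle T le_rfl s0
      have h5 := hW s0
      have h6 : γ * ∑ s', polMat P (π T) s0 s' * (W s' - V T s') ≤ γ * (W s0 - V T s0) :=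
        mul_le_mul_of_nonneg_left h3 hγ0.le
      linarith
    have hm0 : W s0 - V T s0 ≤ 0 := by nlinarith
    intro s
    have := hs0 s (Finset.mem_univ s)
    linarith
  have heT0 : ∀ s, 0 ≤ V T s - Vstar s := fun s => by linarith [hWge s, hWle s]
  -- abbreviations
  obtain ⟨e, hes⟩ : ∃ e : ℕ → S → ℝ, ∀ t s, e t s = V t s - Vstar s :=
    ⟨fun t s => V t s - Vstar s, fun t s => rfl⟩
  obtain ⟨d, hds⟩ : ∃ d : ℕ → S → ℝ, ∀ t s, d t s = D (π t s) (πstar s) :=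
    ⟨fun t s => D (π t s) (πstar s), fun t s => rfl⟩
  -- one-step recursion against the optimal policy
  have hrec : ∀ t, t < T → ∀ s,
      e (t+1) s ≤ x.mulVec (e t) s + η⁻¹ * (d t s - d (t+1) s) := by
    intro t ht s
    have h3 := hthree t ht s (πstar s) (hπstar s)
    have hd1 := hD (π t s) (π (t+1) s)
    have h4 : η * ((∑ a, (c s a + γ * ∑ s', P s a s' * V t s') * (π (t+1) s a - πstar s a))
        + h (π (t+1) s) - h (πstar s))
        ≤ D (π t s) (πstar s) - D (π (t+1) s) (πstar s) := by linarith
    have h5 := mul_le_mul_of_nonneg_left h4 (inv_nonneg.mpr hη0.le)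
    rw [inv_mul_cancel_left₀ hη0.ne'] at h5
    have hb1 := hBpol (π (t+1)) πstar (V t) s
    have hb2 := hBdiffV πstar (V t) Vstar s
    have hb3 := hVstarfix s
    have hupd' := hupd t ht s
    have hxe : x.mulVec (e t) s = γ * ∑ s', polMat P πstar s s' * (V t s' - Vstar s') := by
      show ∑ s', (γ • Pm) s s' * e t s' = _
      rw [Finset.mul_sum]
      refine Finset.sum_congr rfl fun s' _ => ?_
      show γ * Pm s s' * e t s' = γ * (Pm s s' * (V t s' - Vstar s'))
      rw [hes]
      ring
    rw [hes, hds, hds]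
    linarith
  -- the Lyapunov-type quantity a t
  obtain ⟨av, havs⟩ : ∃ av : ℕ → S → ℝ,
      ∀ t s, av t s = M.mulVec (e t) s + η⁻¹ * M.mulVec (d t) s :=
    ⟨fun t s => M.mulVec (e t) s + η⁻¹ * M.mulVec (d t) s, fun t s => rfl⟩
  have hMsub : ∀ (v1 v2 : S → ℝ) s,
      M.mulVec (fun s' => v1 s' - v2 s') s = M.mulVec v1 s - M.mulVec v2 s := by
    intro v1 v2 s
    show ∑ s', M s s' * (v1 s' - v2 s') = (∑ s', M s s' * v1 s') - ∑ s', M s s' * v2 s'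
    rw [← Finset.sum_sub_distrib]
    exact Finset.sum_congr rfl fun s' _ => by ring
  have hMlin : ∀ (v1 v2 : S → ℝ) (b : ℝ) s,
      M.mulVec (fun s' => v1 s' + b * v2 s') s = M.mulVec v1 s + b * M.mulVec v2 s := by
    intro v1 v2 b s
    show ∑ s', M s s' * (v1 s' + b * v2 s')
        = (∑ s', M s s' * v1 s') + b * ∑ s', M s s' * v2 s'
    rw [Finset.mul_sum, ← Finset.sum_add_distrib]
    exact Finset.sum_congr rfl fun s' _ => by ring
  have hstep2 : ∀ t, t < T → ∀ s, av (t+1) s + e t s ≤ av t s := by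
    intro t ht s
    have h1 : ∀ s', e (t+1) s' ≤ (fun s'' =>
        x.mulVec (e t) s'' + η⁻¹ * ((fun s3 => d t s3 - d (t+1) s3) s'')) s' :=
      fun s' => hrec t ht s'
    have h2 := hMmono _ _ h1 s
    have h3 := hMlin (x.mulVec (e t)) (fun s3 => d t s3 - d (t+1) s3) η⁻¹ s
    have h4 := hMsub (d t) (d (t+1)) s
    have h5 := congrFun (hMres (e t)) s
    have h6 : (M.mulVec (e t) - e t) s = M.mulVec (e t) s - e t s := rfl
    rw [h3, h4] at h2
    rw [h6] at h5
    rw [havs, havs]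
    linarith
  -- telescoping
  have htel : ∀ n, n ≤ T → ∀ s,
      av n s + ∑ t ∈ Finset.range n, e t s ≤ av 0 s := by
    intro n
    induction n with
    | zero => intro _ s; simp
    | succ n ih =>
      intro hn s
      have h1 := hstep2 n (Nat.lt_of_succ_le hn) s
      have h2 := ih (by omega) s
      rw [Finset.sum_range_succ]
      linarith
  -- initial bounds
  have hMe0b : ∀ s, M.mulVec (e 0) s ≤ (1 - γ)⁻¹ * u := by
    intro s
    have h1 := hMbound (e 0) s
    have h2 : ‖e 0‖ ≤ u := by
      have he0 : e 0 = V 0 - Vstar := funext fun s' => by rw [hes]; rfl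
      rw [he0]
      exact hgap
    have h3 : (1 - γ)⁻¹ * ‖e 0‖ ≤ (1 - γ)⁻¹ * u :=
      mul_le_mul_of_nonneg_left h2 (inv_nonneg.mpr h1γ.le)
    calc M.mulVec (e 0) s ≤ |M.mulVec (e 0) s| := le_abs_self _
      _ ≤ (1 - γ)⁻¹ * ‖e 0‖ := h1
      _ ≤ (1 - γ)⁻¹ * u := h3
  have hbreg' : ‖M.mulVec (d 0)‖ ≤ Dc / (1 - γ) := by
    have hd0eq : (fun s => D (π 0 s) (πstar s)) = d 0 := funext fun s => (hds 0 s).symm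
    rw [← hd0eq]
    exact hbreg
  have hMd0b : ∀ s, η⁻¹ * M.mulVec (d 0) s ≤ (1 - γ)⁻¹ * u := by
    intro s
    have h1 : M.mulVec (d 0) s ≤ Dc / (1 - γ) := by
      calc M.mulVec (d 0) s ≤ |M.mulVec (d 0) s| := le_abs_self _
        _ = ‖M.mulVec (d 0) s‖ := (Real.norm_eq_abs _).symm
        _ ≤ ‖M.mulVec (d 0)‖ := norm_le_pi_norm _ s
        _ ≤ Dc / (1 - γ) := hbreg'
    have h2 : η⁻¹ * M.mulVec (d 0) s ≤ η⁻¹ * (Dc / (1 - γ)) :=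
      mul_le_mul_of_nonneg_left h1 (inv_nonneg.mpr hη0.le)
    have h3 : η⁻¹ * (Dc / (1 - γ)) = (1 - γ)⁻¹ * u := by
      rw [hη]
      field_simp
    linarith
  have hav0 : ∀ s, av 0 s ≤ 2 * u / (1 - γ) := by
    intro s
    have h1 := hMe0b s
    have h2 := hMd0b s
    have h3 : (1 - γ)⁻¹ * u + (1 - γ)⁻¹ * u = 2 * u / (1 - γ) := by
      field_simp
      ring
    rw [havs]
    linarith
  -- nonnegativity facts
  have het0 : ∀ t, t ≤ T → ∀ s, 0 ≤ e t s := by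
    intro t ht s
    rw [hes]
    have := hVmono t T ht le_rfl s
    linarith [heT0 s]
  have hdnn : ∀ t s, 0 ≤ d t s := fun t s => by rw [hds]; exact hD _ _
  have havTnn : ∀ s, 0 ≤ av T s := by
    intro s
    rw [havs]
    have h1 := hMnonneg (e T) (het0 T le_rfl) s
    have h2 := hMnonneg (d T) (hdnn T) s
    have h3 : 0 ≤ η⁻¹ * M.mulVec (d T) s := mul_nonneg (inv_nonneg.mpr hη0.le) h2
    linarith
  -- T is large
  have hTge : (4 : ℝ) / (1 - γ) ≤ (T : ℝ) := by
    rw [hT]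
    exact Nat.le_ceil _
  have hT4 : (4 : ℝ) ≤ (T : ℝ) * (1 - γ) := (div_le_iff₀ h1γ).mp hTge
  -- bound on e T
  have heTb : ∀ s, e T s ≤ u / 2 := by
    intro s
    have h1 := htel T le_rfl s
    have h2 : (T : ℝ) * e T s ≤ ∑ t ∈ Finset.range T, e t s := by
      calc (T : ℝ) * e T s = ∑ _t ∈ Finset.range T, e T s := by
            rw [Finset.sum_const, Finset.card_range, nsmul_eq_mul]
        _ ≤ ∑ t ∈ Finset.range T, e t s :=
            Finset.sum_le_sum fun t htm => by
              rw [hes, hes]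
              linarith [hVmono t T (Finset.mem_range.mp htm).le le_rfl s]
    have h3 : (T : ℝ) * e T s ≤ 2 * u / (1 - γ) := by
      have ha := havTnn s
      have hb := hav0 s
      calc (T : ℝ) * e T s ≤ ∑ t ∈ Finset.range T, e t s := h2
        _ ≤ av 0 s - av T s := by linarith [h1]
        _ ≤ av 0 s := by linarith [havTnn s]
        _ ≤ 2 * u / (1 - γ) := hav0 s
    have h4 : (T : ℝ) * e T s * (1 - γ) ≤ 2 * u := by
      rw [← le_div_iff₀ h1γ]
      exact h3
    have h5 : 4 * e T s ≤ (T : ℝ) * (1 - γ) * e T s :=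
      mul_le_mul_of_nonneg_right hT4 (het0 T le_rfl s)
    nlinarith
  have hconc2 : ‖V T - Vstar‖ ≤ u / 2 := by
    rw [pi_norm_le_iff_of_nonneg (by positivity)]
    intro s
    have h1 : (V T - Vstar) s = V T s - Vstar s := rfl
    rw [Real.norm_eq_abs, h1, abs_of_nonneg (heT0 s)]
    have := heTb s
    rw [hes] at this
    exact this
  refine ⟨?_, hconc2, ?_⟩
  · rw [pi_norm_le_iff_of_nonneg (norm_nonneg _)]
    intro s
    have h1 : (W - Vstar) s = W s - Vstar s := rfl
    rw [Real.norm_eq_abs, h1, abs_of_nonneg (by linarith [hWge s])]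
    have h2 := norm_le_pi_norm (V T - Vstar) s
    rw [Real.norm_eq_abs] at h2
    have h3 : (V T - Vstar) s = V T s - Vstar s := rfl
    rw [h3, abs_of_nonneg (heT0 s)] at h2
    linarith [hWle s]
  · have hbd : ∀ s, M.mulVec (d T) s ≤ 2 * Dc / (1 - γ) := by
      intro s
      have h1 := htel T le_rfl s
      have h2 : 0 ≤ ∑ t ∈ Finset.range T, e t s :=
        Finset.sum_nonneg fun t htm => het0 t (Finset.mem_range.mp htm).le s
      have h3 : av T s ≤ 2 * u / (1 - γ) := by
        have hb := hav0 s
        have hc : av T s ≤ av 0 s := by linarith [h1, h2]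
        linarith [hb, hc]
      have h4 : η⁻¹ * M.mulVec (d T) s ≤ 2 * u / (1 - γ) := by
        have h5 := hMnonneg (e T) (het0 T le_rfl) s
        rw [havs] at h3
        linarith
      have h6 := mul_le_mul_of_nonneg_left h4 hη0.le
      rw [mul_inv_cancel_left₀ hη0.ne'] at h6
      have h7 : η * (2 * u / (1 - γ)) = 2 * Dc / (1 - γ) := by
        rw [hη]
        field_simp
      linarith
    have hnn : ∀ s, 0 ≤ M.mulVec (d T) s := hMnonneg (d T) (hdnn T)
    have hgoal : ‖M.mulVec (d T)‖ ≤ 2 * Dc / (1 - γ) := by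
      rw [pi_norm_le_iff_of_nonneg (div_nonneg (by positivity) h1γ.le)]
      intro s
      rw [Real.norm_eq_abs, abs_of_nonneg (hnn s)]
      exact hbd s
    have hdTeq : (fun s => D (π T s) (πstar s)) = d T := funext fun s => (hds T s).symm
    rw [hdTeq]
    exact hgoal
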